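/- Consider the conditional one-step inequality of α-SVRG: if J is ν-strongly convex, ∇J is δ-Lipschitz, and the α-SVRG estimator noise satisfies the bound of Lemma 3, then for the update w_i = w_{i-1} - μ g_α(w_{i-1}) with snapshot w̄_{i-1}: E[‖w° - w_i‖² | w_{i-1}, w̄_{i-1}] ≤ (1 - 2μν + (2α+7)μ²δ²)‖w° - w_{i-1}‖² + 8αδ²μ²‖w° - w̄_{i-1}‖² + 3(1-α)σ²μ². -/

import Mathlib

open InnerProductSpace Filter Set

/-- Strong-convexity gradient inequality at a minimizer. -/
lemma strong_convex_min_grad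
    {E : Type*} [NormedAddCommGroup E] [InnerProductSpace ℝ E] [CompleteSpace E]
    {J : E → ℝ} {g : E} {ν : ℝ}
    (hsc : StrongConvexOn Set.univ ν J) {wo : E} (hmin : IsMinOn J Set.univ wo)
    (x : E) (hgrad : HasGradientAt J g x) :
    inner ℝ g (wo - x) ≤ -(ν * ‖wo - x‖ ^ 2) := by
  set d : E := wo - x with hd
  -- Step 1: J wo + (ν/2) * c ≤ J x
  have step1 : J wo + ν / 2 * ‖d‖ ^ 2 ≤ J x := by
    have h1 : ∀ t : ℝ, t ∈ Set.Ioo (0:ℝ) 1 → J wo + t * (ν / 2 * ‖d‖ ^ 2) ≤ J x := by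
      intro t ht
      have hcvx := hsc.2 (Set.mem_univ wo) (Set.mem_univ x)
        (le_of_lt ht.1) (by linarith [ht.2] : (0:ℝ) ≤ 1 - t) (by ring)
      have hm : J wo ≤ J (t • wo + (1 - t) • x) := hmin (Set.mem_univ _)
      simp only [smul_eq_mul] at hcvx
      rw [show ‖wo - x‖ = ‖d‖ from rfl] at hcvx
      nlinarith [ht.1, ht.2]
    have htend : Tendsto (fun t : ℝ => J wo + t * (ν / 2 * ‖d‖ ^ 2)) (nhdsWithin 1 (Set.Iio 1))
        (nhds (J wo + 1 * (ν / 2 * ‖d‖ ^ 2))) := by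
      have : ContinuousAt (fun t : ℝ => J wo + t * (ν / 2 * ‖d‖ ^ 2)) 1 := by fun_prop
      exact this.continuousWithinAt.tendsto
    rw [one_mul] at htend
    refine le_of_tendsto htend ?_
    filter_upwards [Ioo_mem_nhdsLT_of_mem (by norm_num : (1:ℝ) ∈ Set.Ioc (0:ℝ) 1)] with t ht
    exact h1 t ht
  -- Step 2: derivative of t ↦ J (x + t • d) at 0
  have hline : HasDerivAt (fun t : ℝ => J (x + t • d)) (inner ℝ g d) 0 := by
    have hL : HasDerivAt (fun t : ℝ => x + t • d) d 0 := by
      simpa using ((hasDerivAt_id (0:ℝ)).smul_const d).const_add x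
    have hF : HasFDerivAt J (toDual ℝ E g) (x + (0:ℝ) • d) := by
      simpa using (hasGradientAt_iff_hasFDerivAt.mp hgrad)
    simpa [Function.comp_def] using hF.comp_hasDerivAt 0 hL
  have hslope : Tendsto (slope (fun t : ℝ => J (x + t • d)) 0) (nhdsWithin 0 (Set.Ioi 0))
      (nhds (inner ℝ g d)) := by
    have := hasDerivAt_iff_tendsto_slope.mp hline
    exact this.mono_left (nhdsWithin_mono _ (fun t ht => ne_of_gt ht))
  have hub : Tendsto (fun t : ℝ => J wo - J x - (1 - t) * (ν / 2 * ‖d‖ ^ 2)) (nhdsWithin 0 (Set.Ioi 0))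
      (nhds (J wo - J x - ν / 2 * ‖d‖ ^ 2)) := by
    have : ContinuousAt (fun t : ℝ => J wo - J x - (1 - t) * (ν / 2 * ‖d‖ ^ 2)) 0 := by fun_prop
    simpa using this.continuousWithinAt.tendsto
  have step2 : inner ℝ g d ≤ J wo - J x - ν / 2 * ‖d‖ ^ 2 := by
    refine le_of_tendsto_of_tendsto hslope hub ?_
    filter_upwards [Ioo_mem_nhdsGT_of_mem (by norm_num : (0:ℝ) ∈ Set.Ico (0:ℝ) 1)] with t ht
    have hcvx := hsc.2 (Set.mem_univ wo) (Set.mem_univ x)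
      (le_of_lt ht.1) (by linarith [ht.2] : (0:ℝ) ≤ 1 - t) (by ring)
    have heq : t • wo + (1 - t) • x = x + t • d := by
      simp only [hd, smul_sub, sub_smul, one_smul]; abel
    rw [heq] at hcvx
    simp only [smul_eq_mul] at hcvx
    rw [show ‖wo - x‖ = ‖d‖ from rfl] at hcvx
    have ht0 : (0:ℝ) < t := ht.1
    rw [slope_def_field, zero_smul, add_zero, sub_zero, div_le_iff₀ ht0]
    nlinarith
  linarith
section Main

open InnerProductSpace Finset in
theorem alpha_svrg_one_step
    {E : Type*} [NormedAddCommGroup E] [InnerProductSpace ℝ E] [CompleteSpace E]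
    {N : ℕ} (hN : 0 < N)
    (Q : Fin N → E → ℝ) (gradQ : Fin N → E → E) (J : E → ℝ) (gradJ : E → E)
    (δn : Fin N → ℝ) (δ ν σ μ α : ℝ) (wo : E)
    (hα0 : 0 ≤ α) (hα1 : α ≤ 1) (hμ : 0 < μ) (hν : 0 < ν)
    (hQ : ∀ n x, HasGradientAt (Q n) (gradQ n x) x)
    (hJ : ∀ x, J x = (N : ℝ)⁻¹ * ∑ n, Q n x)
    (hgradJ : ∀ x, gradJ x = (N : ℝ)⁻¹ • ∑ n, gradQ n x)
    (hLipn : ∀ n x y, ‖gradQ n x - gradQ n y‖ ≤ δn n * ‖x - y‖)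
    (hδ : δ ^ 2 = (N : ℝ)⁻¹ * ∑ n, δn n ^ 2)
    (hσ : σ ^ 2 = (N : ℝ)⁻¹ * ∑ n, ‖gradQ n wo‖ ^ 2)
    (hsc : StrongConvexOn Set.univ ν J)
    (hmin : IsMinOn J Set.univ wo)
    (hLipJ : ∀ x y, ‖gradJ x - gradJ y‖ ≤ δ * ‖x - y‖)
    (hnoise : ∀ x xbar : E, (N : ℝ)⁻¹ * ∑ n,
        ‖gradJ x - (α • (gradJ xbar - gradQ n xbar) + gradQ n x)‖ ^ 2 ≤
      (2 * α + 6) * δ ^ 2 * ‖wo - x‖ ^ 2 + 8 * α * δ ^ 2 * ‖wo - xbar‖ ^ 2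
        + 3 * (1 - α) * σ ^ 2)
    (x xbar : E) :
    (N : ℝ)⁻¹ * ∑ n,
        ‖wo - (x - μ • (α • (gradJ xbar - gradQ n xbar) + gradQ n x))‖ ^ 2 ≤
      (1 - 2 * μ * ν + (2 * α + 7) * μ ^ 2 * δ ^ 2) * ‖wo - x‖ ^ 2
        + 8 * α * δ ^ 2 * μ ^ 2 * ‖wo - xbar‖ ^ 2
        + 3 * (1 - α) * σ ^ 2 * μ ^ 2 := by
  have hN' : (0:ℝ) < (N:ℝ) := by exact_mod_cast hN
  have hNne : (N:ℝ) ≠ 0 := ne_of_gt hN'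
  set g : Fin N → E := fun n => α • (gradJ xbar - gradQ n xbar) + gradQ n x with hg
  -- J has gradient gradJ everywhere
  have hJgrad : ∀ y, HasGradientAt J (gradJ y) y := by
    intro y
    have h1 : HasFDerivAt (fun z => ∑ n, Q n z) (∑ n, toDual ℝ E (gradQ n y)) y :=
      HasFDerivAt.fun_sum (fun n _ => hasGradientAt_iff_hasFDerivAt.mp (hQ n y))
    have h2 := h1.const_mul ((N:ℝ)⁻¹)
    have h3 : HasFDerivAt J ((N:ℝ)⁻¹ • ∑ n, toDual ℝ E (gradQ n y)) y := by
      have hfun : J = fun z => (N:ℝ)⁻¹ * ∑ n, Q n z := funext hJ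
      rw [hfun]; exact h2
    rw [hasGradientAt_iff_hasFDerivAt, hgradJ]
    simpa [map_smul, map_sum] using h3
  -- gradient vanishes at the minimizer
  have hgwo : gradJ wo = 0 := by
    have hloc : IsLocalMin J wo := hmin.isLocalMin Filter.univ_mem
    have h := hloc.hasFDerivAt_eq_zero (hasGradientAt_iff_hasFDerivAt.mp (hJgrad wo))
    have h2 := congrArg (toDual ℝ E).symm h
    simpa using h2
  -- sums of individual gradients
  have hSx : ∑ n, gradQ n x = (N:ℝ) • gradJ x := by
    rw [hgradJ x, smul_smul, mul_inv_cancel₀ hNne, one_smul]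
  have hSxb : ∑ n, gradQ n xbar = (N:ℝ) • gradJ xbar := by
    rw [hgradJ xbar, smul_smul, mul_inv_cancel₀ hNne, one_smul]
  -- the estimator is unbiased
  have hsum : ∑ n, g n = (N:ℝ) • gradJ x := by
    simp only [hg]
    rw [Finset.sum_add_distrib, ← Finset.smul_sum, Finset.sum_sub_distrib,
      Finset.sum_const, Finset.card_univ, Fintype.card_fin, hSxb, hSx,
      ← Nat.cast_smul_eq_nsmul ℝ]
    simp
  -- strong convexity inequality
  have hC : ⟪gradJ x, wo - x⟫_ℝ ≤ -(ν * ‖wo - x‖ ^ 2) :=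
    strong_convex_min_grad hsc hmin x (hJgrad x)
  have hC' : ⟪wo - x, gradJ x⟫_ℝ ≤ -(ν * ‖wo - x‖ ^ 2) := by
    rwa [real_inner_comm]
  -- Lipschitz bound on full gradient
  have hF : ‖gradJ x‖ ^ 2 ≤ δ ^ 2 * ‖wo - x‖ ^ 2 := by
    have h1 := hLipJ x wo
    rw [hgwo, sub_zero, norm_sub_rev] at h1
    have h2 := pow_le_pow_left₀ (norm_nonneg (gradJ x)) h1 2
    calc ‖gradJ x‖ ^ 2 ≤ (δ * ‖wo - x‖) ^ 2 := h2
      _ = δ ^ 2 * ‖wo - x‖ ^ 2 := by ring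
  have hnoise' : (N:ℝ)⁻¹ * ∑ n, ‖gradJ x - g n‖ ^ 2 ≤
      (2 * α + 6) * δ ^ 2 * ‖wo - x‖ ^ 2 + 8 * α * δ ^ 2 * ‖wo - xbar‖ ^ 2
        + 3 * (1 - α) * σ ^ 2 := hnoise x xbar
  -- inner product sums
  have hinner1 : ∑ n, ⟪wo - x, g n⟫_ℝ = (N:ℝ) * ⟪wo - x, gradJ x⟫_ℝ := by
    rw [← inner_sum, hsum, real_inner_smul_right]
  have hinner2 : ∑ n, ⟪gradJ x, g n⟫_ℝ = (N:ℝ) * ‖gradJ x‖ ^ 2 := by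
    rw [← inner_sum, hsum, real_inner_smul_right, real_inner_self_eq_norm_sq]
  -- expansion of the squared norms
  have key1 : (N:ℝ)⁻¹ * ∑ n, ‖wo - (x - μ • g n)‖ ^ 2
      = ‖wo - x‖ ^ 2 + 2 * μ * ⟪wo - x, gradJ x⟫_ℝ
        + μ ^ 2 * ((N:ℝ)⁻¹ * ∑ n, ‖g n‖ ^ 2) := by
    have expand : ∀ n, ‖wo - (x - μ • g n)‖ ^ 2
        = ‖wo - x‖ ^ 2 + 2 * μ * ⟪wo - x, g n⟫_ℝ + μ ^ 2 * ‖g n‖ ^ 2 := by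
      intro n
      have heq : wo - (x - μ • g n) = (wo - x) + μ • g n := by abel
      rw [heq, norm_add_sq_real, real_inner_smul_right, norm_smul]
      simp [mul_pow, sq_abs]; ring
    rw [Finset.sum_congr rfl (fun n _ => expand n), Finset.sum_add_distrib,
      Finset.sum_add_distrib, Finset.sum_const, Finset.card_univ, Fintype.card_fin,
      ← Finset.mul_sum, ← Finset.mul_sum, hinner1, nsmul_eq_mul]
    field_simp
    try ring
  have key2 : (N:ℝ)⁻¹ * ∑ n, ‖g n‖ ^ 2
      = (N:ℝ)⁻¹ * ∑ n, ‖gradJ x - g n‖ ^ 2 + ‖gradJ x‖ ^ 2 := by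
    have expand : ∀ n, ‖gradJ x - g n‖ ^ 2
        = ‖gradJ x‖ ^ 2 - 2 * ⟪gradJ x, g n⟫_ℝ + ‖g n‖ ^ 2 := by
      intro n
      rw [norm_sub_sq_real]; try ring
    rw [Finset.sum_congr rfl (fun n _ => expand n), Finset.sum_add_distrib,
      Finset.sum_sub_distrib, Finset.sum_const, Finset.card_univ, Fintype.card_fin,
      ← Finset.mul_sum, hinner2, nsmul_eq_mul]
    field_simp
    try ring
  rw [key1, key2]
  have t1 : μ ^ 2 * ((N:ℝ)⁻¹ * ∑ n, ‖gradJ x - g n‖ ^ 2) ≤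
      μ ^ 2 * ((2 * α + 6) * δ ^ 2 * ‖wo - x‖ ^ 2 + 8 * α * δ ^ 2 * ‖wo - xbar‖ ^ 2
        + 3 * (1 - α) * σ ^ 2) :=
    mul_le_mul_of_nonneg_left hnoise' (sq_nonneg μ)
  have t2 : 2 * μ * ⟪wo - x, gradJ x⟫_ℝ ≤ 2 * μ * (-(ν * ‖wo - x‖ ^ 2)) :=
    mul_le_mul_of_nonneg_left hC' (by positivity)
  have t3 : μ ^ 2 * ‖gradJ x‖ ^ 2 ≤ μ ^ 2 * (δ ^ 2 * ‖wo - x‖ ^ 2) :=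
    mul_le_mul_of_nonneg_left hF (sq_nonneg μ)
  nlinarith [t1, t2, t3]

end Main
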